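/- Let w be a word over an alphabet Σ with a type-(n+1) presentation given by nonempty words v₁, v₂, …, v_{n+1}. Then there exist words u₁, …, uₙ, each beginning with the first symbol of v₁, such that for every r with 1 ≤ r ≤ n and every choice of indices 1 ≤ i₁ < i₂ < ⋯ < i_r ≤ n, the concatenation u_{i₁} u_{i₂} ⋯ u_{i_r} is a suffix of the right quotient w/v₁. -/

import Mathlib

namespace FOGPaper

/-- Words of type `n`: the empty word is of type 0; a word is of type `n+1` if it has
the form `v·u·v` with `v` of type `n` and `u` nonempty. -/
inductive WordType {α : Type*} : ℕ → List α → Prop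
  | zero : WordType 0 []
  | succ {n : ℕ} {v u : List α} : WordType n v → u ≠ [] → WordType (n + 1) (v ++ u ++ v)

/-- The word determined by a type-presentation: `w₁ = v₁`, `wᵢ₊₁ = wᵢ·vᵢ₊₁·wᵢ`. -/
def presWord {α : Type*} (v₁ : List α) (vs : List (List α)) : List α :=
  vs.foldl (fun w v => w ++ v ++ w) v₁

/-- for a type-`(n+1)` presentation of `w` given by nonempty words
`v₁,…,vₙ₊₁`, there are words `u₁,…,uₙ`, all beginning with the first symbol of `v₁`,
such that every concatenation `u_{i₁} u_{i₂} ⋯ u_{i_r}` (for `1 ≤ i₁ < ⋯ < i_r ≤ n`,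
`1 ≤ r ≤ n`) is a suffix of the right quotient `w/v₁` (equivalently,
`u_{i₁} ⋯ u_{i_r} ++ v₁` is a suffix of `w`). -/
theorem suffixes_from_type_presentation {α : Type*} (n : ℕ)
    (v : Fin (n + 1) → List α) (hv : ∀ i, v i ≠ []) :
    ∃ u : Fin n → List α,
      (∀ i, (u i).head? = (v 0).head?) ∧
      ∀ l : List (Fin n), l ≠ [] → l.Chain' (· < ·) →
        ((l.map u).flatten ++ v 0) <:+
          presWord (v 0) (List.ofFn fun i : Fin n => v i.succ) := by
  set W : ℕ → List α := fun k =>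
    presWord (v 0) ((List.ofFn fun i : Fin n => v i.succ).take k) with hWdef
  have hW0 : W 0 = v 0 := rfl
  have hstep : ∀ k (hk : k < n),
      W (k + 1) = W k ++ v ((⟨k, hk⟩ : Fin n)).succ ++ W k := by
    intro k hk
    have htake : (List.ofFn fun i : Fin n => v i.succ).take (k + 1)
        = (List.ofFn fun i : Fin n => v i.succ).take k
          ++ [v ((⟨k, hk⟩ : Fin n)).succ] := by
      rw [List.take_succ]
      simp [hk]
    simp [hWdef, presWord, htake, List.foldl_append]
  have hsucc : ∀ k, k < n → W k <:+ W (k + 1) := by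
    intro k hk
    rw [hstep k hk]
    exact List.suffix_append _ _
  have hmono : ∀ m, m ≤ n → ∀ k, k ≤ m → W k <:+ W m := by
    intro m
    induction m with
    | zero =>
      intro _ k hk
      interval_cases k
      exact List.suffix_rfl
    | succ m ih =>
      intro hm k hk
      rcases Nat.lt_or_ge k (m + 1) with h | h
      · exact (ih (by omega) k (by omega)).trans (hsucc m (by omega))
      · have : k = m + 1 := by omega
        subst this
        exact List.suffix_rfl
  have hex : ∀ i : Fin n, ∃ p, p ++ v 0 = W i.val := by
    intro i
    have := hmono i.val i.isLt.le 0 (Nat.zero_le _)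
    rw [hW0] at this
    exact this
  choose q hq using hex
  refine ⟨fun i => v 0 ++ v i.succ ++ q i, ?_, ?_⟩
  · intro i
    obtain ⟨a, t, h0⟩ := List.exists_cons_of_ne_nil (hv 0)
    simp [h0]
  · have key : ∀ l : List (Fin n), l.Chain' (· < ·) → ∀ j, j ≤ n →
        (∀ i ∈ l, i.val < j) →
        ((l.map fun i => v 0 ++ v i.succ ++ q i).flatten ++ v 0) <:+ W j := by
      intro l
      induction l using List.reverseRecOn with
      | nil =>
        intro _ j hj _
        have := hmono j hj 0 (Nat.zero_le _)
        rw [hW0] at this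
        simpa using this
      | append_singleton l m ih =>
        intro hch j hj hbound
        have hp : (l ++ [m]).Pairwise (· < ·) := List.isChain_iff_pairwise.mp hch
        have hp1 : l.Pairwise (· < ·) := (List.pairwise_append.mp hp).1
        have hlb : ∀ i ∈ l, i.val < m.val := by
          intro i hi
          exact (List.pairwise_append.mp hp).2.2 i hi m (by simp)
        have hm : m.val < j := hbound m (by simp)
        have IH := ih (List.isChain_iff_pairwise.mpr hp1) m.val m.isLt.le hlb
        obtain ⟨t, ht⟩ := IH
        have h2 : ((l ++ [m]).map fun i => v 0 ++ v i.succ ++ q i).flatten ++ v 0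
            <:+ W (m.val + 1) := by
          rw [hstep m.val m.isLt]
          refine ⟨t, ?_⟩
          simp only [List.map_append, List.map_cons, List.map_nil,
            List.flatten_append, List.flatten_cons, List.flatten_nil,
            List.append_nil, List.append_assoc, Fin.eta]
          rw [hq m, ← ht]
          simp [List.append_assoc]
        exact h2.trans (hmono j hj (m.val + 1) hm)
    intro l _ hch
    have hres := key l hch n le_rfl (fun i _ => i.isLt)
    have hWn : W n = presWord (v 0) (List.ofFn fun i : Fin n => v i.succ) := by
      rw [hWdef]
      simp [List.take_of_length_le (le_of_eq List.length_ofFn)]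
    rwa [hWn] at hres

end FOGPaper
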